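/- Let X be a random variable with the Poisson distribution of parameter μ > 0, and let ε > 1. Then P(X ≥ εμ) ≤ e^{-μ}(e/ε)^{εμ}. Moreover, e^{-μ}(e/ε)^{εμ} = exp(-μ(1 - ε + ε ln ε)), and if ε > e then the constant 1 - ε + ε ln ε is strictly greater than 1, so that P(X ≥ εμ) ≤ e^{-μ}. -/

import Mathlib

open MeasureTheory

lemma real_exp_tsum' (x : ℝ) : ∑' n : ℕ, x ^ n / n.factorial = Real.exp x := by
  rw [Real.exp_eq_exp_ℝ, NormedSpace.exp_eq_tsum_div]

theorem poisson_upper_tail_chernoff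
    {Ω : Type*} [MeasurableSpace Ω] (ℙ : Measure Ω) [IsProbabilityMeasure ℙ]
    (X : Ω → ℕ) (hXmeas : Measurable X) (μ ε : ℝ) (hμ : 0 < μ) (hε : 1 < ε)
    (hX : ∀ k : ℕ, ℙ {ω | X ω = k} =
      ENNReal.ofReal (Real.exp (-μ) * μ ^ k / (Nat.factorial k))) :
    ℙ {ω | ε * μ ≤ (X ω : ℝ)} ≤
        ENNReal.ofReal (Real.exp (-μ) * (Real.exp 1 / ε) ^ (ε * μ)) ∧
    Real.exp (-μ) * (Real.exp 1 / ε) ^ (ε * μ) =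
        Real.exp (-μ * (1 - ε + ε * Real.log ε)) ∧
    (Real.exp 1 < ε →
      1 < 1 - ε + ε * Real.log ε ∧
      ℙ {ω | ε * μ ≤ (X ω : ℝ)} ≤ ENNReal.ofReal (Real.exp (-μ))) := by
  have hε0 : (0:ℝ) < ε := lt_trans one_pos hε
  have ha : (0:ℝ) < ε * μ := mul_pos hε0 hμ
  have hrpow : (Real.exp 1 / ε) ^ (ε * μ) = Real.exp (ε * μ * (1 - Real.log ε)) := by
    rw [Real.rpow_def_of_pos (div_pos (Real.exp_pos 1) hε0)]
    rw [Real.log_div (Real.exp_ne_zero 1) (ne_of_gt hε0), Real.log_exp]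
    ring_nf
  have heq : Real.exp (-μ) * (Real.exp 1 / ε) ^ (ε * μ) =
      Real.exp (-μ * (1 - ε + ε * Real.log ε)) := by
    rw [hrpow, ← Real.exp_add]
    ring_nf
  set n := ⌈ε * μ⌉₊ with hn
  have hset : {ω | ε * μ ≤ (X ω : ℝ)} = ⋃ k : ℕ, {ω | X ω = n + k} := by
    ext ω
    simp only [Set.mem_setOf_eq, Set.mem_iUnion]
    constructor
    · intro h
      have : n ≤ X ω := Nat.ceil_le.2 h
      exact ⟨X ω - n, by omega⟩
    · rintro ⟨k, hk⟩
      have : (n : ℝ) ≤ X ω := by exact_mod_cast (by omega : n ≤ X ω)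
      exact le_trans (Nat.le_ceil _) this
  set C : ℝ := Real.exp (-μ) * ε ^ (-(ε * μ)) with hC
  have hC0 : 0 ≤ C := mul_nonneg (Real.exp_pos _).le (Real.rpow_nonneg hε0.le _)
  set f : ℕ → ℝ := fun m => (ε * μ) ^ m / (Nat.factorial m) with hf
  have hf0 : ∀ m, 0 ≤ f m := fun m =>
    div_nonneg (pow_nonneg ha.le _) (Nat.cast_nonneg _)
  have hfsum : Summable f := Real.summable_pow_div_factorial (ε * μ)
  -- pointwise bound
  have hpt : ∀ k : ℕ, Real.exp (-μ) * μ ^ (n + k) / (Nat.factorial (n + k)) ≤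
      C * f (n + k) := by
    intro k
    have hm : ε * μ ≤ ((n + k : ℕ) : ℝ) := by
      have := Nat.le_ceil (ε * μ)
      have h2 : (n : ℝ) ≤ ((n + k : ℕ) : ℝ) := by exact_mod_cast Nat.le_add_right n k
      linarith
    have hpow : ε ^ (ε * μ) ≤ ε ^ ((n + k : ℕ) : ℝ) :=
      Real.rpow_le_rpow_of_exponent_le hε.le hm
    rw [Real.rpow_natCast] at hpow
    have key : μ ^ (n + k) ≤ ε ^ (-(ε * μ)) * (ε * μ) ^ (n + k) := by
      rw [mul_pow, Real.rpow_neg hε0.le, ← mul_assoc]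
      have hμpow : (0:ℝ) ≤ μ ^ (n + k) := pow_nonneg hμ.le _
      have h1 : (1:ℝ) ≤ (ε ^ (ε * μ))⁻¹ * ε ^ (n + k) := by
        rw [inv_mul_eq_div, le_div_iff₀ (Real.rpow_pos_of_pos hε0 _)]
        simpa using hpow
      nlinarith [mul_le_mul_of_nonneg_right h1 hμpow]
    have hnum : Real.exp (-μ) * μ ^ (n + k) ≤ C * (ε * μ) ^ (n + k) := by
      rw [hC, mul_assoc]
      exact mul_le_mul_of_nonneg_left key (Real.exp_pos _).le
    have hfac : (0:ℝ) < (Nat.factorial (n + k) : ℝ) := by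
      exact_mod_cast Nat.factorial_pos _
    calc Real.exp (-μ) * μ ^ (n + k) / (Nat.factorial (n + k))
        ≤ C * (ε * μ) ^ (n + k) / (Nat.factorial (n + k)) := by
          gcongr
      _ = C * f (n + k) := by rw [hf]; ring
  -- summability of shifted series
  have hfsum' : Summable (fun k : ℕ => C * f (n + k)) := by
    have : Summable (fun k : ℕ => f (k + n)) := (summable_nat_add_iff n).2 hfsum
    have h2 : Summable (fun k : ℕ => f (n + k)) := by
      simpa [Nat.add_comm] using this
    exact h2.mul_left C
  -- sum bound
  have hsum_le : ∑' k : ℕ, C * f (n + k) ≤ C * Real.exp (ε * μ) := by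
    rw [tsum_mul_left]
    apply mul_le_mul_of_nonneg_left _ hC0
    have h2 : Summable (fun k : ℕ => f (k + n)) := (summable_nat_add_iff n).2 hfsum
    have hkey := Summable.sum_add_tsum_nat_add (f := f) n hfsum
    have hpart : 0 ≤ ∑ i ∈ Finset.range n, f i :=
      Finset.sum_nonneg fun i _ => hf0 i
    have hle : ∑' k : ℕ, f (k + n) ≤ ∑' m, f m := by linarith
    calc ∑' k : ℕ, f (n + k) = ∑' k : ℕ, f (k + n) := by
          simp [Nat.add_comm]
      _ ≤ ∑' m, f m := hle
      _ = Real.exp (ε * μ) := real_exp_tsum' (ε * μ)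
  -- the value
  have hval : C * Real.exp (ε * μ) = Real.exp (-μ) * (Real.exp 1 / ε) ^ (ε * μ) := by
    rw [hC, hrpow, mul_assoc, ← Real.exp_add, Real.rpow_neg hε0.le,
      Real.rpow_def_of_pos hε0]
    rw [← Real.exp_neg, ← Real.exp_add, ← Real.exp_add]
    ring_nf
  -- main bound
  have hmain : ℙ {ω | ε * μ ≤ (X ω : ℝ)} ≤
      ENNReal.ofReal (Real.exp (-μ) * (Real.exp 1 / ε) ^ (ε * μ)) := by
    rw [hset]
    calc ℙ (⋃ k : ℕ, {ω | X ω = n + k}) ≤ ∑' k : ℕ, ℙ {ω | X ω = n + k} :=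
          measure_iUnion_le _
      _ ≤ ∑' k : ℕ, ENNReal.ofReal (C * f (n + k)) := by
          apply ENNReal.tsum_le_tsum
          intro k
          rw [hX (n + k)]
          exact ENNReal.ofReal_le_ofReal (hpt k)
      _ = ENNReal.ofReal (∑' k : ℕ, C * f (n + k)) := by
          rw [ENNReal.ofReal_tsum_of_nonneg (fun k => mul_nonneg hC0 (hf0 _)) hfsum']
      _ ≤ ENNReal.ofReal (C * Real.exp (ε * μ)) := ENNReal.ofReal_le_ofReal hsum_le
      _ = ENNReal.ofReal (Real.exp (-μ) * (Real.exp 1 / ε) ^ (ε * μ)) := by rw [hval]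
  refine ⟨hmain, heq, fun he => ?_⟩
  have hlog : 1 < Real.log ε := by
    rw [← Real.log_exp 1]
    exact Real.log_lt_log (Real.exp_pos 1) he
  have hgt : 1 < 1 - ε + ε * Real.log ε := by nlinarith
  refine ⟨hgt, hmain.trans (ENNReal.ofReal_le_ofReal ?_)⟩
  rw [heq]
  apply Real.exp_le_exp.2
  nlinarith
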